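/- Let U be a ring, let A be a left U-module admitting a resolution 0 → P_m → ⋯ → P_1 → P_0 → A → 0 by finitely generated projective left U-modules, and suppose there is d ≥ 0 such that Ext^n_U(A,U) = 0 for all n ≠ d. Then A admits a resolution 0 → Q_d → ⋯ → Q_1 → Q_0 → A → 0 of length d by finitely generated projective left U-modules; in particular the projective dimension of A is at most d. -/

import Mathlib

open CategoryTheory

/-- `0 → P m → ⋯ → P 1 → P 0 → A → 0` is an exact sequence of left `U`-modules in which
every `P i` is a finitely generated projective module.  The sequence is encoded as an
`ℕ`-indexed complex whose modules in degrees `> m` are trivial. -/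
def IsFGProjResolution (U : Type) [Ring U] (A : Type) [AddCommGroup A] [Module U A]
    (m : ℕ) (P : ℕ → Type) [∀ i, AddCommGroup (P i)] [∀ i, Module U (P i)]
    (f : ∀ i, P (i + 1) →ₗ[U] P i) (ε : P 0 →ₗ[U] A) : Prop :=
  Function.Surjective ε ∧ Function.Exact (f 0) ε ∧
    (∀ i, Function.Exact (f (i + 1)) (f i)) ∧
    (∀ i, Module.Finite U (P i)) ∧ (∀ i, Module.Projective U (P i)) ∧
    ∀ i, m < i → Subsingleton (P i)

namespace DualityAux

open Function LinearMap


section Algebra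
variable (U : Type) [Ring U]

lemma subsingleton_fgproj (K : Type) [AddCommGroup K] [Module U K] [Subsingleton K] :
    Module.Finite U K ∧ Module.Projective U K :=
  ⟨⟨⟨⊥, by ext x; simpa using (Subsingleton.elim x 0)⟩⟩, inferInstance⟩

lemma key : ∀ (k : ℕ) (K : Type) [AddCommGroup K] [Module U K]
    (M : ℕ → Type) [∀ i, AddCommGroup (M i)] [∀ i, Module U (M i)]
    (g : ∀ i, M (i + 1) →ₗ[U] M i) (p : M 0 →ₗ[U] K),
    Function.Surjective p → Function.Exact (g 0) p →
    (∀ i, Function.Exact (g (i + 1)) (g i)) →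
    (∀ i, Module.Finite U (M i)) → (∀ i, Module.Projective U (M i)) →
    (∀ i, k ≤ i → Subsingleton (M i)) →
    (∀ i, Function.Exact (fun φ : M i →ₗ[U] U => φ ∘ₗ g i)
        (fun φ : M (i + 1) →ₗ[U] U => φ ∘ₗ g (i + 1))) →
    Module.Finite U K ∧ Module.Projective U K := by
  intro k
  induction k with
  | zero =>
    intro K _ _ M _ _ g p hp _ _ _ _ hss _
    haveI : Subsingleton (M 0) := hss 0 le_rfl
    haveI : Subsingleton K := ⟨fun a b => by
      obtain ⟨x, rfl⟩ := hp a; obtain ⟨y, rfl⟩ := hp b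
      rw [Subsingleton.elim x y]⟩
    exact subsingleton_fgproj U K
  | succ k ih =>
    intro K _ _ M _ _ g p hp hex0 hex hfin hproj hss hdual
    haveI := hfin 0; haveI := hproj 0
    set N := LinearMap.range (g 0) with hN
    have hkerp : LinearMap.ker p = N := LinearMap.exact_iff.mp hex0
    obtain ⟨hNfin, hNproj⟩ := ih ↥N (fun i => M (i + 1)) (fun i => g (i + 1))
      ((g 0).rangeRestrict)
      (g 0).surjective_rangeRestrict
      (LinearMap.exact_iff.mpr (by
        rw [LinearMap.ker_rangeRestrict]; exact LinearMap.exact_iff.mp (hex 0)))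
      (fun i => hex (i + 1)) (fun i => hfin (i + 1)) (fun i => hproj (i + 1))
      (fun i hi => hss (i + 1) (by omega)) (fun i => hdual (i + 1))
    -- step 1 : every functional on N extends to M 0
    have hrestr : ∀ ψ : ↥N →ₗ[U] U, ∃ φ : M 0 →ₗ[U] U, ∀ x : ↥N, φ ↑x = ψ x := by
      intro ψ
      have h0 : (fun φ : M 1 →ₗ[U] U => φ ∘ₗ g 1) (ψ ∘ₗ (g 0).rangeRestrict) = 0 := by
        ext y
        have hz : (g 0).rangeRestrict (g 1 y) = 0 :=
          Subtype.ext (by simpa using (hex 0).apply_apply_eq_zero y)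
        simp [hz]
      obtain ⟨φ, hφ⟩ := (hdual 0 (ψ ∘ₗ (g 0).rangeRestrict)).mp h0
      refine ⟨φ, fun x => ?_⟩
      obtain ⟨y, hy⟩ := x.2
      have h1 : φ (g 0 y) = ψ ((g 0).rangeRestrict y) := by
        have := congrArg (fun (θ : M 1 →ₗ[U] U) => θ y) hφ
        simpa using this
      have h2 : (g 0).rangeRestrict y = x := Subtype.ext hy
      exact hy ▸ (h1.trans (congrArg ψ h2))
    -- step 2 : a retraction r : M 0 → N
    obtain ⟨n, q, hq⟩ := Module.Finite.exists_fin' U ↥N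
    obtain ⟨σ, hσ⟩ := Module.projective_lifting_property q LinearMap.id hq
    choose φ hφ using fun t : Fin n => hrestr ((LinearMap.proj t) ∘ₗ σ)
    set r : M 0 →ₗ[U] ↥N := q ∘ₗ LinearMap.pi φ with hr
    have hrx : ∀ x : ↥N, r ↑x = x := by
      intro x
      have h1 : LinearMap.pi φ (↑x : M 0) = σ x := funext fun t => by
        simpa using hφ t x
      have h2 := congrArg (fun (θ : ↥N →ₗ[U] ↥N) => θ x) hσ
      simp only [LinearMap.comp_apply, LinearMap.id_apply] at h2
      simp [hr, h1, h2]
    -- step 3 : build a section of p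
    set s : M 0 →ₗ[U] M 0 := LinearMap.id - N.subtype ∘ₗ r with hs
    have hps : ∀ z, p (s z) = p z := by
      intro z
      have hmem : (↑(r z) : M 0) ∈ LinearMap.ker p := by rw [hkerp]; exact (r z).2
      simp only [hs, LinearMap.sub_apply, LinearMap.id_apply, LinearMap.comp_apply,
        Submodule.subtype_apply, map_sub]
      rw [LinearMap.mem_ker.mp hmem, sub_zero]
    have hsker : ∀ z, p z = 0 → s z = 0 := by
      intro z hz
      have hzN : z ∈ N := by rw [← hkerp]; exact hz
      have := hrx ⟨z, hzN⟩
      simp only [hs, LinearMap.sub_apply, LinearMap.id_apply, LinearMap.comp_apply,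
        Submodule.subtype_apply]
      rw [this]
      exact sub_self z
    have hdiff : ∀ a b : M 0, p a = p b → s a = s b := by
      intro a b hab
      have h1 : s (a - b) = 0 := hsker _ (by rw [map_sub, hab, sub_self])
      rw [map_sub, sub_eq_zero] at h1
      exact h1
    set h : K → M 0 := Function.surjInv hp with hh
    have hph : ∀ x, p (h x) = x := fun x => Function.surjInv_eq hp x
    set t : K →ₗ[U] M 0 :=
      { toFun := fun x => s (h x)
        map_add' := fun a b => by
          show s (h (a + b)) = s (h a) + s (h b)
          rw [hdiff (h (a + b)) (h a + h b) (by rw [map_add, hph, hph, hph]), map_add]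
        map_smul' := fun c a => by
          show s (h (c • a)) = c • s (h a)
          rw [hdiff (h (c • a)) (c • h a) (by rw [map_smul, hph, hph]), map_smul] } with ht
    have hpt : p ∘ₗ t = LinearMap.id := by
      ext x
      show p (s (h x)) = x
      rw [hps, hph]
    exact ⟨Module.Finite.of_surjective p hp, Module.Projective.of_split t p hpt⟩



end Algebra

section Build
variable (U : Type) [Ring U]

lemma exact_of_subsingleton_mid {X Y Z : Type} [AddCommGroup X] [AddCommGroup Y] [AddCommGroup Z]
    [Module U X] [Module U Y] [Module U Z] [Subsingleton Y]
    (a : X →ₗ[U] Y) (b : Y →ₗ[U] Z) : Function.Exact a b := by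
  intro y
  constructor
  · intro _; exact ⟨0, Subsingleton.elim _ _⟩
  · intro _
    rw [Subsingleton.elim y 0, map_zero]

lemma build : ∀ (d : ℕ) (A : Type) [AddCommGroup A] [Module U A]
    (P : ℕ → Type) [∀ i, AddCommGroup (P i)] [∀ i, Module U (P i)]
    (f : ∀ i, P (i + 1) →ₗ[U] P i) (ε : P 0 →ₗ[U] A),
    Function.Surjective ε → Function.Exact (f 0) ε →
    (∀ i, Function.Exact (f (i + 1)) (f i)) →
    (∀ i, Module.Finite U (P i)) → (∀ i, Module.Projective U (P i)) →
    (match d with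
      | 0 => Module.Finite U A ∧ Module.Projective U A
      | e + 1 => Module.Finite U ↥(LinearMap.range (f e)) ∧
          Module.Projective U ↥(LinearMap.range (f e))) →
    ∃ (Q : ℕ → ModuleCat U) (g : ∀ i, ↥(Q (i + 1)) →ₗ[U] ↥(Q i))
      (η : ↥(Q 0) →ₗ[U] A),
      IsFGProjResolution U A d (fun i => ↥(Q i)) g η := by
  intro d
  induction d with
  | zero =>
    intro A _ _ P _ _ f ε hsur hex0 hex hfin hproj hsyz
    refine ⟨fun i => match i with
        | 0 => ModuleCat.of U A
        | _ + 1 => ModuleCat.of U PUnit,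
      fun i => 0, LinearMap.id, ?_, ?_, ?_, ?_, ?_, ?_⟩
    · exact fun a => ⟨a, rfl⟩
    · intro y
      constructor
      · intro hy
        exact ⟨0, by simpa using hy.symm⟩
      · rintro ⟨x, rfl⟩
        rfl
    · intro i
      exact exact_of_subsingleton_mid U _ _
    · intro i
      match i with
      | 0 => exact hsyz.1
      | _ + 1 => infer_instance
    · intro i
      match i with
      | 0 => exact hsyz.2
      | _ + 1 => infer_instance
    · intro i hi
      match i, hi with
      | _ + 1, _ => infer_instance
  | succ d ih =>
    intro A _ _ P _ _ f ε hsur hex0 hex hfin hproj hsyz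
    obtain ⟨Q', g', η', hQ1, hQ2, hQ3, hQ4, hQ5, hQ6⟩ :=
      ih ↥(LinearMap.range (f 0)) (fun i => P (i + 1)) (fun i => f (i + 1))
        ((f 0).rangeRestrict)
        (f 0).surjective_rangeRestrict
        (LinearMap.exact_iff.mpr (by
          rw [LinearMap.ker_rangeRestrict]; exact LinearMap.exact_iff.mp (hex 0)))
        (fun i => hex (i + 1)) (fun i => hfin (i + 1)) (fun i => hproj (i + 1))
        (by cases d with
          | zero => exact hsyz
          | succ e => exact hsyz)
    refine ⟨fun i => match i with
        | 0 => ModuleCat.of U (P 0)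
        | i + 1 => Q' i,
      fun i => match i with
        | 0 => (LinearMap.range (f 0)).subtype ∘ₗ η'
        | i + 1 => g' i,
      ε, hsur, ?_, ?_, ?_, ?_, ?_⟩
    · -- Exact (subtype ∘ η') ε
      rw [LinearMap.exact_iff]
      rw [LinearMap.exact_iff.mp hex0]
      rw [LinearMap.range_comp, LinearMap.range_eq_top.mpr hQ1, Submodule.map_top,
        Submodule.range_subtype]
    · intro i
      match i with
      | 0 =>
        rw [LinearMap.exact_iff]
        rw [LinearMap.ker_comp, Submodule.ker_subtype, Submodule.comap_bot]
        exact LinearMap.exact_iff.mp hQ2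
      | i + 1 => exact hQ3 i
    · intro i
      match i with
      | 0 => exact hfin 0
      | i + 1 => exact hQ4 i
    · intro i
      match i with
      | 0 => exact hproj 0
      | i + 1 => exact hQ5 i
    · intro i hi
      match i, hi with
      | i + 1, hi => exact hQ6 i (by omega)

end Build

section Bridge
variable (U : Type) [Ring U]
variable (A : Type) [AddCommGroup A] [Module U A]
variable (P : ℕ → Type) [∀ i, AddCommGroup (P i)] [∀ i, Module U (P i)]
variable (f : ∀ i, P (i + 1) →ₗ[U] P i) (ε : P 0 →ₗ[U] A)

noncomputable def Cpx (hex : ∀ i, Function.Exact (f (i + 1)) (f i)) :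
    ChainComplex (ModuleCat U) ℕ :=
  ChainComplex.of (fun i => ModuleCat.of U (P i)) (fun i => ModuleCat.ofHom (f i))
    (fun i => by
      apply ModuleCat.hom_ext
      exact LinearMap.ext fun x => (hex i).apply_apply_eq_zero x)

lemma Cpx_d (hex : ∀ i, Function.Exact (f (i + 1)) (f i)) (i : ℕ) :
    (Cpx U P f hex).d (i + 1) i = ModuleCat.ofHom (f i) := by
  delta Cpx
  exact ChainComplex.of_d (fun i => ModuleCat.of U (P i)) (fun i => ModuleCat.ofHom (f i)) i

variable (hsur : Function.Surjective ε) (hex0 : Function.Exact (f 0) ε)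
  (hex : ∀ i, Function.Exact (f (i + 1)) (f i))
  (hproj : ∀ i, Module.Projective U (P i))

noncomputable def Res : ProjectiveResolution (ModuleCat.of U A) where
  complex := Cpx U P f hex
  projective := fun n => by
    show Projective (ModuleCat.of U (P n))
    exact (IsProjective.iff_projective (P n)).mp (hproj n)
  π := (ChainComplex.toSingle₀Equiv _ _).symm ⟨ModuleCat.ofHom ε, by
    show (Cpx U P f hex).d 1 0 ≫ ModuleCat.ofHom ε = 0
    rw [Cpx_d]
    apply ModuleCat.hom_ext
    exact LinearMap.ext fun x => hex0.apply_apply_eq_zero x⟩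
  quasiIso := ⟨fun n => by
    cases n with
    | zero =>
      rw [ChainComplex.quasiIsoAt₀_iff, ShortComplex.quasiIso_iff_of_zeros']
      · constructor
        · rw [ShortComplex.moduleCat_exact_iff]
          intro x₂ hx₂
          have hx : ε x₂ = 0 := by
            have h := hx₂
            simp only [HomologicalComplex.shortComplexFunctor'_map_τ₂,
              ChainComplex.toSingle₀Equiv_symm_apply_f_zero] at h
            exact h
          obtain ⟨y, hy⟩ := (hex0 x₂).mp hx
          refine ⟨y, ?_⟩
          show (Cpx U P f hex).d 1 0 y = x₂
          rw [Cpx_d]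
          exact hy
        · simp only [HomologicalComplex.shortComplexFunctor'_map_τ₂,
            ChainComplex.toSingle₀Equiv_symm_apply_f_zero]
          exact (ModuleCat.epi_iff_surjective _).2 hsur
      all_goals rfl
    | succ n =>
      rw [quasiIsoAt_iff_exactAt']
      · rw [HomologicalComplex.exactAt_iff' _ (n + 2) (n + 1) n (by simp) (by simp)]
        rw [ShortComplex.moduleCat_exact_iff]
        intro x₂ hx₂
        have hx : f n x₂ = 0 := by
          have h := hx₂
          rw [show (HomologicalComplex.sc' (Cpx U P f hex) (n + 2) (n + 1) n).g =
            (Cpx U P f hex).d (n + 1) n from rfl, Cpx_d] at h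
          exact h
        obtain ⟨y, hy⟩ := (hex n x₂).mp hx
        refine ⟨y, ?_⟩
        show (Cpx U P f hex).d (n + 2) (n + 1) y = x₂
        rw [Cpx_d]
        exact hy
      · apply ChainComplex.exactAt_succ_single_obj⟩

include ε hsur hex0 hex hproj

lemma bridge_lift (n : ℕ)
    (hvan : Subsingleton (((Ext ℤ (ModuleCat U) (n + 1)).obj
      (Opposite.op (ModuleCat.of U A))).obj (ModuleCat.of U U))) :
    ∀ φ : P (n + 1) →ₗ[U] U, φ ∘ₗ f (n + 1) = 0 → ∃ ψ : P n →ₗ[U] U, ψ ∘ₗ f n = φ := by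
  let res := Res U A P f ε hsur hex0 hex hproj
  let Y := ModuleCat.of U U
  have hz : Limits.IsZero ((res.complex.linearYonedaObj ℤ Y).homology (n + 1)) := by
    have h1 : Limits.IsZero (((Ext ℤ (ModuleCat U) (n + 1)).obj
        (Opposite.op (ModuleCat.of U A))).obj Y) := ModuleCat.isZero_of_subsingleton _
    exact h1.of_iso (res.isoExt (n + 1) Y).symm
  have hexAt : (res.complex.linearYonedaObj ℤ Y).ExactAt (n + 1) :=
    (HomologicalComplex.exactAt_iff_isZero_homology _ _).2 hz
  rw [HomologicalComplex.exactAt_iff' _ n (n + 1) (n + 2) (by simp) (by simp)] at hexAt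
  rw [ShortComplex.moduleCat_exact_iff] at hexAt
  intro φ hφ
  have h2 : (HomologicalComplex.sc' (res.complex.linearYonedaObj ℤ Y) n (n + 1) (n + 2)).g
      (ModuleCat.ofHom φ : ModuleCat.of U (P (n + 1)) ⟶ ModuleCat.of U U) = 0 := by
    show ((res.complex.linearYonedaObj ℤ Y).d (n + 1) (n + 2))
      (ModuleCat.ofHom φ : ModuleCat.of U (P (n + 1)) ⟶ ModuleCat.of U U) = 0
    rw [ChainComplex.linearYonedaObj_d]
    rw [show res.complex.d (n + 2) (n + 1) = ModuleCat.ofHom (f (n + 1)) from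
      Cpx_d U P f hex (n + 1)]
    exact ModuleCat.hom_ext hφ
  obtain ⟨ψ, hψ⟩ := hexAt _ h2
  refine ⟨ψ.hom, ?_⟩
  have h3 := hψ
  rw [show (HomologicalComplex.sc' (res.complex.linearYonedaObj ℤ Y) n (n + 1) (n + 2)).f =
    (res.complex.linearYonedaObj ℤ Y).d n (n + 1) from rfl,
    ChainComplex.linearYonedaObj_d,
    show res.complex.d (n + 1) n = ModuleCat.ofHom (f n) from Cpx_d U P f hex n] at h3
  exact congrArg ModuleCat.Hom.hom h3

lemma bridge_exact (n : ℕ)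
    (hvan : Subsingleton (((Ext ℤ (ModuleCat U) (n + 1)).obj
      (Opposite.op (ModuleCat.of U A))).obj (ModuleCat.of U U))) :
    Function.Exact (fun φ : P n →ₗ[U] U => φ ∘ₗ f n)
      (fun φ : P (n + 1) →ₗ[U] U => φ ∘ₗ f (n + 1)) := by
  intro φ
  constructor
  · intro hφ
    obtain ⟨ψ, hψ⟩ := bridge_lift U A P f ε hsur hex0 hex hproj n hvan φ hφ
    exact ⟨ψ, hψ⟩
  · rintro ⟨ψ, rfl⟩
    show (ψ ∘ₗ f n) ∘ₗ f (n + 1) = 0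
    exact LinearMap.ext fun x => by
      simpa using congrArg ψ ((hex n).apply_apply_eq_zero x)

end Bridge

end DualityAux

open DualityAux in
/-- If a left `U`-module `A` admits a finite resolution by finitely generated projective
modules and `Ext^n_U(A, U) = 0` for all `n ≠ d`, then `A` admits such a resolution of
length `d`; in particular the projective dimension of `A` is at most `d`. -/
theorem duality_module_has_resolution_of_length_d
    (U : Type) [Ring U] (A : Type) [AddCommGroup A] [Module U A]
    (m : ℕ) (P : ℕ → Type) [∀ i, AddCommGroup (P i)] [∀ i, Module U (P i)]
    (f : ∀ i, P (i + 1) →ₗ[U] P i) (ε : P 0 →ₗ[U] A)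
    (hres : IsFGProjResolution U A m P f ε)
    (d : ℕ)
    (hvanish : ∀ n : ℕ, n ≠ d →
      Subsingleton (((Ext ℤ (ModuleCat U) n).obj
        (Opposite.op (ModuleCat.of U A))).obj (ModuleCat.of U U))) :
    ∃ (Q : ℕ → ModuleCat U) (g : ∀ i, ↥(Q (i + 1)) →ₗ[U] ↥(Q i))
      (η : ↥(Q 0) →ₗ[U] A),
      IsFGProjResolution U A d (fun i => ↥(Q i)) g η := by
  obtain ⟨hsur, hex0, hex, hfin, hproj, hss⟩ := hres
  have hdual : ∀ n : ℕ, n + 1 ≠ d →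
      Function.Exact (fun φ : P n →ₗ[U] U => φ ∘ₗ f n)
        (fun φ : P (n + 1) →ₗ[U] U => φ ∘ₗ f (n + 1)) :=
    fun n hn =>
      bridge_exact U A P f ε hsur hex0 hex hproj n (hvanish (n + 1) hn)
  exact build U d A P f ε hsur hex0 hex hfin hproj (by
    cases d with
    | zero =>
      exact key U (m + 1) A P f ε hsur hex0 hex hfin hproj
        (fun i hi => hss i (by omega)) (fun i => hdual i (by omega))
    | succ e =>
      exact key U (m + 1 - (e + 1)) ↥(LinearMap.range (f e)) (fun i => P (e + 1 + i))
        (fun i => f (e + 1 + i)) ((f e).rangeRestrict)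
        (f e).surjective_rangeRestrict
        (LinearMap.exact_iff.mpr (by
          rw [LinearMap.ker_rangeRestrict]
          exact LinearMap.exact_iff.mp (hex e)))
        (fun i => hex (e + 1 + i)) (fun i => hfin (e + 1 + i)) (fun i => hproj (e + 1 + i))
        (fun i hi => hss (e + 1 + i) (by omega))
        (fun i => hdual (e + 1 + i) (by omega)))
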